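/- For every n: if there exists a ⟨P2P3⟩-free graph on n vertices that arrows (3,3)^e, then there exists a K_4-free graph on n vertices that arrows (3,3)^e (obtained by repeatedly deleting edges until the arrowing graph is edge-minimal). Consequently F_e(3,3;K_4) ≤ F_e(3,3;⟨P2P3⟩). -/

import Mathlib

/-- `G → (3,3)ᵉ`: every 2-coloring of the edges of `G` contains three pairwise adjacent
vertices whose three connecting edges all have the same color. -/
def EdgeArrows33 {V : Type*} (G : SimpleGraph V) : Prop :=
  ∀ c : Sym2 V → Bool, ∃ x y z : V,
    G.Adj x y ∧ G.Adj x z ∧ G.Adj y z ∧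
    c s(x, y) = c s(x, z) ∧ c s(x, z) = c s(y, z)

/-- `G` is `H`-free: `G` contains no (not necessarily induced) subgraph isomorphic to `H`,
i.e. there is no injective graph homomorphism from `H` to `G`. -/
def HFree {W V : Type*} (H : SimpleGraph W) (G : SimpleGraph V) : Prop :=
  ¬ ∃ f : H →g G, Function.Injective f

/-- `P₂ ∪ P₃`: the disjoint union of an edge (`0-1`) and a two-edge path (`2-3-4`). -/
def P2P3 : SimpleGraph (Fin 5) :=
  SimpleGraph.fromRel (fun i j => (i = 0 ∧ j = 1) ∨ (i = 2 ∧ j = 3) ∨ (i = 3 ∧ j = 4))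

/-- `⟨P2P3⟩`: the complement of `P₂ ∪ P₃`. -/
def P2P3bar : SimpleGraph (Fin 5) := P2P3ᶜ

/-- `K₄`, the complete graph on four vertices. -/
def K4 : SimpleGraph (Fin 4) := ⊤

/-- The edge Folkman number `F_e(3,3;H)`, as an element of `ℕ∞`: the least `n`
admitting an `H`-free graph on `n` vertices arrowing `(3,3)ᵉ`. -/
noncomputable def folkmanE {W : Type*} (H : SimpleGraph W) : ℕ∞ :=
  sInf {n : ℕ∞ | ∃ m : ℕ, (m : ℕ∞) = n ∧
    ∃ G : SimpleGraph (Fin m), HFree H G ∧ EdgeArrows33 G}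

lemma no_common_nbrs {V : Type*} {G : SimpleGraph V} (hP : HFree P2P3bar G)
    {p q r s v : V}
    (hpr : G.Adj p r) (hps : G.Adj p s) (hqr : G.Adj q r) (hqs : G.Adj q s)
    (hrs : G.Adj r s) (hvp : G.Adj v p) (hvq : G.Adj v q)
    (hpq : p ≠ q) (hvr : v ≠ r) (hvs : v ≠ s) : False := by
  have h1 : p ≠ r := hpr.ne
  have h2 : p ≠ s := hps.ne
  have h3 : q ≠ r := hqr.ne
  have h4 : q ≠ s := hqs.ne
  have h5 : r ≠ s := hrs.ne
  have h6 : v ≠ p := hvp.ne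
  have h7 : v ≠ q := hvq.ne
  apply hP
  have hinj : Function.Injective ![p, q, r, v, s] := by
    intro i j hij
    fin_cases i <;> fin_cases j <;> simp_all
  refine ⟨⟨![p, q, r, v, s], ?_⟩, hinj⟩
  intro i j hij
  simp only [P2P3bar, P2P3, SimpleGraph.compl_adj, SimpleGraph.fromRel_adj] at hij
  fin_cases i <;> fin_cases j <;> simp_all <;>
    first | exact hpr.symm | exact hps.symm | exact hqr.symm | exact hqs.symm
          | exact hrs.symm | exact hvp.symm | exact hvq.symm

def fixAB (p q r : Bool) : Bool := if p = q then !p else p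

def fixAD (p q r : Bool) : Bool := if p = q ∧ r = !p then p else !p

def fixCD (p q r : Bool) : Bool := if p = q ∧ r = !p then !p else !r

lemma fix_abc : ∀ p q r : Bool, ¬(fixAB p q r = p ∧ p = q) := by decide

lemma fix_abd : ∀ p q r : Bool, ¬(fixAB p q r = fixAD p q r ∧ fixAD p q r = r) := by decide

lemma fix_acd : ∀ p q r : Bool, ¬(p = fixAD p q r ∧ fixAD p q r = fixCD p q r) := by decide

lemma fix_bcd : ∀ p q r : Bool, ¬(q = fixCD p q r ∧ fixCD p q r = r) := by decide

lemma sym2_ne {V : Type*} {x y u v : V} (h1 : ¬(x = u ∧ y = v)) (h2 : ¬(x = v ∧ y = u)) :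
    s(x, y) ≠ s(u, v) := fun h => (Sym2.eq_iff.mp h).elim h1 h2

def recolor {V : Type*} [DecidableEq V] (col : Sym2 V → Bool) (a b c d : V) :
    Sym2 V → Bool := fun e =>
  if e = s(a, b) then fixAB (col s(a, c)) (col s(b, c)) (col s(b, d))
  else if e = s(a, d) then fixAD (col s(a, c)) (col s(b, c)) (col s(b, d))
  else if e = s(c, d) then fixCD (col s(a, c)) (col s(b, c)) (col s(b, d))
  else col e

lemma delete_still_arrows {V : Type*} [DecidableEq V] {G : SimpleGraph V}
    (hP : HFree P2P3bar G) (hA : EdgeArrows33 G) {a b c d : V}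
    (hab : G.Adj a b) (hac : G.Adj a c) (had : G.Adj a d)
    (hbc : G.Adj b c) (hbd : G.Adj b d) (hcd : G.Adj c d) :
    EdgeArrows33 (G.deleteEdges {s(a, b)}) := by
  intro col
  by_contra hno
  push_neg at hno
  -- distinctness
  have nab : a ≠ b := hab.ne
  have nac : a ≠ c := hac.ne
  have nad : a ≠ d := had.ne
  have nbc : b ≠ c := hbc.ne
  have nbd : b ≠ d := hbd.ne
  have ncd : c ≠ d := hcd.ne
  set p := col s(a, c) with hp
  set q := col s(b, c) with hq
  set r := col s(b, d) with hr
  -- Sym2 inequalities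
  have eac_ab : s(a, c) ≠ s(a, b) := sym2_ne (fun h => nbc h.2.symm) (fun h => nab h.1)
  have eac_ad : s(a, c) ≠ s(a, d) := sym2_ne (fun h => ncd h.2) (fun h => nad h.1)
  have eac_cd : s(a, c) ≠ s(c, d) := sym2_ne (fun h => nac h.1) (fun h => nad h.1)
  have ebc_ab : s(b, c) ≠ s(a, b) := sym2_ne (fun h => nab h.1.symm) (fun h => nac h.2.symm)
  have ebc_ad : s(b, c) ≠ s(a, d) := sym2_ne (fun h => nab h.1.symm) (fun h => nbd h.1)
  have ebc_cd : s(b, c) ≠ s(c, d) := sym2_ne (fun h => nbc h.1) (fun h => nbd h.1)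
  have ebd_ab : s(b, d) ≠ s(a, b) := sym2_ne (fun h => nab h.1.symm) (fun h => nad h.2.symm)
  have ebd_ad : s(b, d) ≠ s(a, d) := sym2_ne (fun h => nab h.1.symm) (fun h => nbd h.1)
  have ebd_cd : s(b, d) ≠ s(c, d) := sym2_ne (fun h => nbc h.1) (fun h => nbd h.1)
  have ead_ab : s(a, d) ≠ s(a, b) := sym2_ne (fun h => nbd h.2.symm) (fun h => nab h.1)
  have ecd_ab : s(c, d) ≠ s(a, b) := sym2_ne (fun h => nac h.1.symm) (fun h => nbc h.1.symm)
  have ecd_ad : s(c, d) ≠ s(a, d) := sym2_ne (fun h => nac h.1.symm) (fun h => ncd h.1)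
  -- the modified coloring
  set c' : Sym2 V → Bool := recolor col a b c d with hc'
  have vab : c' s(a, b) = fixAB p q r := by
    rw [hc', recolor, if_pos rfl, hp, hq, hr]
  have vad : c' s(a, d) = fixAD p q r := by
    rw [hc', recolor, if_neg ead_ab, if_pos rfl, hp, hq, hr]
  have vcd : c' s(c, d) = fixCD p q r := by
    rw [hc', recolor, if_neg ecd_ab, if_neg ecd_ad, if_pos rfl, hp, hq, hr]
  have vac : c' s(a, c) = p := by
    rw [hc', recolor, if_neg eac_ab, if_neg eac_ad, if_neg eac_cd, hp]
  have vbc : c' s(b, c) = q := by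
    rw [hc', recolor, if_neg ebc_ab, if_neg ebc_ad, if_neg ebc_cd, hq]
  have vbd : c' s(b, d) = r := by
    rw [hc', recolor, if_neg ebd_ab, if_neg ebd_ad, if_neg ebd_cd, hr]
  have agree : ∀ e, e ≠ s(a, b) → e ≠ s(a, d) → e ≠ s(c, d) → c' e = col e := by
    intro e h1 h2 h3; rw [hc', recolor, if_neg h1, if_neg h2, if_neg h3]
  -- the key lemma: a monochromatic triangle containing a special edge is impossible
  have key : ∀ x y z : V, G.Adj x y → G.Adj x z → G.Adj y z →
      c' s(x, y) = c' s(x, z) → c' s(x, z) = c' s(y, z) →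
      (s(x, y) = s(a, b) ∨ s(x, y) = s(a, d) ∨ s(x, y) = s(c, d)) → False := by
    intro x y z axy axz ayz h1 h2 hsp
    rcases hsp with hxy | hxy | hxy
    · -- edge {x,y} = {a,b}; third vertex z must be c or d
      rw [hxy] at h1
      rcases Sym2.eq_iff.mp hxy with ⟨hx, hy⟩ | ⟨hx, hy⟩ <;>
        rw [hx] at axz h1 <;> rw [hy] at ayz <;> rw [hx, hy] at h2
      · -- x = a, y = b
        have hz : z = c ∨ z = d := by
          by_contra hcon
          push_neg at hcon
          exact no_common_nbrs hP hac had hbc hbd hcd axz.symm ayz.symm nab hcon.1 hcon.2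
        rcases hz with hz | hz <;> rw [hz] at h1 h2
        · rw [vab, vac] at h1; rw [vac, vbc] at h2
          exact fix_abc p q r ⟨h1, h2⟩
        · rw [vab, vad] at h1; rw [vad, vbd] at h2
          exact fix_abd p q r ⟨h1, h2⟩
      · -- x = b, y = a
        have hz : z = c ∨ z = d := by
          by_contra hcon
          push_neg at hcon
          exact no_common_nbrs hP hac had hbc hbd hcd ayz.symm axz.symm nab hcon.1 hcon.2
        rcases hz with hz | hz <;> rw [hz] at h1 h2
        · rw [vab, vbc] at h1; rw [vbc, vac] at h2
          exact fix_abc p q r ⟨h1.trans h2, h2.symm⟩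
        · rw [vab, vbd] at h1; rw [vbd, vad] at h2
          exact fix_abd p q r ⟨h1.trans h2, h2.symm⟩
    · -- edge {x,y} = {a,d}; third vertex z must be b or c
      rw [hxy] at h1
      rcases Sym2.eq_iff.mp hxy with ⟨hx, hy⟩ | ⟨hx, hy⟩ <;>
        rw [hx] at axz h1 <;> rw [hy] at ayz <;> rw [hx, hy] at h2
      · -- x = a, y = d
        have hz : z = b ∨ z = c := by
          by_contra hcon
          push_neg at hcon
          exact no_common_nbrs hP hab hac hbd.symm hcd.symm hbc axz.symm ayz.symm nad hcon.1 hcon.2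
        rcases hz with hz | hz <;> rw [hz] at h1 h2
        · rw [show s(d, b) = s(b, d) from Sym2.eq_swap] at h2
          rw [vad, vab] at h1; rw [vab, vbd] at h2
          exact fix_abd p q r ⟨h1.symm, h1.trans h2⟩
        · rw [show s(d, c) = s(c, d) from Sym2.eq_swap] at h2
          rw [vad, vac] at h1; rw [vac, vcd] at h2
          exact fix_acd p q r ⟨h1.symm, h1.trans h2⟩
      · -- x = d, y = a
        have hz : z = b ∨ z = c := by
          by_contra hcon
          push_neg at hcon
          exact no_common_nbrs hP hab hac hbd.symm hcd.symm hbc ayz.symm axz.symm nad hcon.1 hcon.2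
        rcases hz with hz | hz <;> rw [hz] at h1 h2
        · rw [show s(d, b) = s(b, d) from Sym2.eq_swap] at h1 h2
          rw [vad, vbd] at h1; rw [vbd, vab] at h2
          exact fix_abd p q r ⟨(h1.trans h2).symm, h1⟩
        · rw [show s(d, c) = s(c, d) from Sym2.eq_swap] at h1 h2
          rw [vad, vcd] at h1; rw [vcd, vac] at h2
          exact fix_acd p q r ⟨(h1.trans h2).symm, h1⟩
    · -- edge {x,y} = {c,d}; third vertex z must be a or b
      rw [hxy] at h1
      rcases Sym2.eq_iff.mp hxy with ⟨hx, hy⟩ | ⟨hx, hy⟩ <;>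
        rw [hx] at axz h1 <;> rw [hy] at ayz <;> rw [hx, hy] at h2
      · -- x = c, y = d
        have hz : z = a ∨ z = b := by
          by_contra hcon
          push_neg at hcon
          exact no_common_nbrs hP hac.symm hbc.symm had.symm hbd.symm hab axz.symm ayz.symm ncd hcon.1 hcon.2
        rcases hz with hz | hz <;> rw [hz] at h1 h2
        · rw [show s(c, a) = s(a, c) from Sym2.eq_swap] at h1 h2
          rw [show s(d, a) = s(a, d) from Sym2.eq_swap] at h2
          rw [vcd, vac] at h1; rw [vac, vad] at h2
          exact fix_acd p q r ⟨h2, (h1.trans h2).symm⟩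
        · rw [show s(c, b) = s(b, c) from Sym2.eq_swap] at h1 h2
          rw [show s(d, b) = s(b, d) from Sym2.eq_swap] at h2
          rw [vcd, vbc] at h1; rw [vbc, vbd] at h2
          exact fix_bcd p q r ⟨h1.symm, h1.trans h2⟩
      · -- x = d, y = c
        have hz : z = a ∨ z = b := by
          by_contra hcon
          push_neg at hcon
          exact no_common_nbrs hP hac.symm hbc.symm had.symm hbd.symm hab ayz.symm axz.symm ncd hcon.1 hcon.2
        rcases hz with hz | hz <;> rw [hz] at h1 h2
        · rw [show s(d, a) = s(a, d) from Sym2.eq_swap] at h1 h2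
          rw [show s(c, a) = s(a, c) from Sym2.eq_swap] at h2
          rw [vcd, vad] at h1; rw [vad, vac] at h2
          exact fix_acd p q r ⟨h2.symm, h1.symm⟩
        · rw [show s(d, b) = s(b, d) from Sym2.eq_swap] at h1 h2
          rw [show s(c, b) = s(b, c) from Sym2.eq_swap] at h2
          rw [vcd, vbd] at h1; rw [vbd, vbc] at h2
          exact fix_bcd p q r ⟨(h1.trans h2).symm, h1⟩
  -- apply arrowing of G to c'
  obtain ⟨x, y, z, axy, axz, ayz, h1, h2⟩ := hA c'
  by_cases m1 : s(x, y) = s(a, b) ∨ s(x, y) = s(a, d) ∨ s(x, y) = s(c, d)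
  · exact key x y z axy axz ayz h1 h2 m1
  by_cases m2 : s(x, z) = s(a, b) ∨ s(x, z) = s(a, d) ∨ s(x, z) = s(c, d)
  · refine key x z y axz axy ayz.symm h1.symm ?_ m2
    rw [show s(z, y) = s(y, z) from Sym2.eq_swap]
    exact h1.trans h2
  by_cases m3 : s(y, z) = s(a, b) ∨ s(y, z) = s(a, d) ∨ s(y, z) = s(c, d)
  · refine key y z x ayz axy.symm axz.symm ?_ ?_ m3
    · rw [show s(y, x) = s(x, y) from Sym2.eq_swap]
      exact (h1.trans h2).symm
    · rw [show s(y, x) = s(x, y) from Sym2.eq_swap,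
        show s(z, x) = s(x, z) from Sym2.eq_swap]
      exact h1
  · push_neg at m1 m2 m3
    refine hno x y z ⟨axy, by simp [m1.1]⟩ ⟨axz, by simp [m2.1]⟩ ⟨ayz, by simp [m3.1]⟩ ?_ ?_
    · rw [← agree _ m1.1 m1.2.1 m1.2.2, ← agree _ m2.1 m2.2.1 m2.2.2]; exact h1
    · rw [← agree _ m2.1 m2.2.1 m2.2.2, ← agree _ m3.1 m3.2.1 m3.2.2]; exact h2

lemma hfree_mono {V W : Type*} {H : SimpleGraph W} {G G' : SimpleGraph V}
    (hle : G' ≤ G) (h : HFree H G) : HFree H G' := by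
  rintro ⟨f, hf⟩
  exact h ⟨(SimpleGraph.Hom.ofLE hle).comp f, fun x y hh => hf hh⟩

lemma to_k4free {n : ℕ} : ∀ (k : ℕ) (G : SimpleGraph (Fin n)), G.edgeSet.ncard ≤ k →
    HFree P2P3bar G → EdgeArrows33 G →
    ∃ G' : SimpleGraph (Fin n), HFree K4 G' ∧ EdgeArrows33 G' := by
  intro k
  induction k with
  | zero =>
    intro G hcard hP hA
    by_cases hK : HFree K4 G
    · exact ⟨G, hK, hA⟩
    · exfalso
      rw [HFree, not_not] at hK
      obtain ⟨f, hf⟩ := hK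
      have hab : G.Adj (f 0) (f 1) := f.map_adj (by
        show K4.Adj 0 1; rw [K4, SimpleGraph.top_adj]; decide)
      have : s(f 0, f 1) ∈ G.edgeSet := (G.mem_edgeSet).mpr hab
      have hpos : 0 < G.edgeSet.ncard :=
        (Set.ncard_pos (Set.toFinite _)).mpr ⟨_, this⟩
      omega
  | succ k ih =>
    intro G hcard hP hA
    by_cases hK : HFree K4 G
    · exact ⟨G, hK, hA⟩
    · rw [HFree, not_not] at hK
      obtain ⟨f, hf⟩ := hK
      have adj : ∀ i j : Fin 4, i ≠ j → G.Adj (f i) (f j) := fun i j hij =>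
        f.map_adj (by rw [K4, SimpleGraph.top_adj]; exact hij)
      have hab : G.Adj (f 0) (f 1) := adj 0 1 (by decide)
      have hac : G.Adj (f 0) (f 2) := adj 0 2 (by decide)
      have had : G.Adj (f 0) (f 3) := adj 0 3 (by decide)
      have hbc : G.Adj (f 1) (f 2) := adj 1 2 (by decide)
      have hbd : G.Adj (f 1) (f 3) := adj 1 3 (by decide)
      have hcd : G.Adj (f 2) (f 3) := adj 2 3 (by decide)
      set G2 := G.deleteEdges {s(f 0, f 1)} with hG2
      have hA2 : EdgeArrows33 G2 := delete_still_arrows hP hA hab hac had hbc hbd hcd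
      have hle : G2 ≤ G := SimpleGraph.deleteEdges_le _
      have hP2 : HFree P2P3bar G2 := hfree_mono hle hP
      have hlt : G2.edgeSet.ncard < G.edgeSet.ncard := by
        rw [hG2, SimpleGraph.edgeSet_deleteEdges]
        exact Set.ncard_diff_singleton_lt_of_mem ((G.mem_edgeSet).mpr hab)
          (Set.toFinite _)
      exact ih G2 (by omega) hP2 hA2

theorem stmt_13 :
    (∀ n : ℕ, (∃ G : SimpleGraph (Fin n), HFree P2P3bar G ∧ EdgeArrows33 G) →
      ∃ G : SimpleGraph (Fin n), HFree K4 G ∧ EdgeArrows33 G) ∧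
    folkmanE K4 ≤ folkmanE P2P3bar := by
  constructor
  · rintro n ⟨G, hP, hA⟩
    exact to_k4free G.edgeSet.ncard G le_rfl hP hA
  · refine sInf_le_sInf ?_
    rintro x ⟨m, hm, G, hP, hA⟩
    exact ⟨m, hm, to_k4free G.edgeSet.ncard G le_rfl hP hA⟩
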